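/- For every natural number n, twice the number ℓ(GD_n) of covering pairs in the Grand Dyck lattice GD_n equals n times the central binomial coefficient C(2n, n); in other words ℓ(GD_n) = n·C(2n,n)/2 and the Hasse index of GD_n is exactly n/2. -/

import Mathlib

/-- Steps of a (Grand) Dyck path: up `U = (1,1)` and down `D = (1,-1)`. -/
inductive Step : Type
  | U : Step
  | D : Step
  deriving DecidableEq

/-- The height of a path: number of up steps minus number of down steps. -/
def height (w : List Step) : ℤ := (w.count Step.U : ℤ) - (w.count Step.D : ℤ)

/-- A Dyck path of semilength `n`: a word of length `2n` with `n` up steps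
(hence `n` down steps) all of whose prefixes have nonnegative height. -/
def IsDyck (n : ℕ) (w : List Step) : Prop :=
  w.length = 2 * n ∧ w.count Step.U = n ∧ ∀ i : ℕ, 0 ≤ height (w.take i)

/-- A Grand Dyck path of semilength `n`: a word of length `2n` with `n` up steps. -/
def IsGrandDyck (n : ℕ) (w : List Step) : Prop :=
  w.length = 2 * n ∧ w.count Step.U = n

/-- The order on paths: pointwise comparison of the heights after each number of steps. -/
def PathLe (w w' : List Step) : Prop :=
  ∀ i : ℕ, height (w.take i) ≤ height (w'.take i)

/-- Strict order on paths. -/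
def PathLt (w w' : List Step) : Prop := PathLe w w' ∧ ¬ PathLe w' w

/-- `Covers P w w'` : within the class of paths satisfying `P`, the path `w'` covers `w`,
i.e. `w < w'` and no path of the class lies strictly between them. -/
def Covers (P : List Step → Prop) (w w' : List Step) : Prop :=
  P w ∧ P w' ∧ PathLt w w' ∧ ∀ z : List Step, P z → ¬ (PathLt w z ∧ PathLt z w')

/-- Number of occurrences of the factor `xy` in the word `w`. -/
def countFactor (x y : Step) (w : List Step) : ℕ :=
  ((Finset.range w.length).filter
    (fun i => w[i]? = some x ∧ w[i + 1]? = some y)).card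

/-- Number of occurrences of the factor `xy` in the word `w` whose starting height
(the height after the first `i` steps, the factor occupying positions `i` and `i+1`,
`0`-indexed) is at least `1`. -/
def countFactorHigh (x y : Step) (w : List Step) : ℕ :=
  ((Finset.range w.length).filter
    (fun i => w[i]? = some x ∧ w[i + 1]? = some y ∧ 1 ≤ height (w.take i))).card

/-- The number of edges of the Hasse diagram of the Grand Dyck lattice `GD_n`,
i.e. the number of covering pairs of Grand Dyck paths of semilength `n`. -/
noncomputable def grandDyckEdges (n : ℕ) : ℕ :=
  Nat.card {p : List Step × List Step // Covers (IsGrandDyck n) p.1 p.2}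


/-! ### Auxiliary material -/

def List.get? {α : Type} (l : List α) (i : ℕ) : Option α := l[i]?

@[simp] theorem List.get?_eq_getElem? {α : Type} (l : List α) (i : ℕ) : l.get? i = l[i]? := rfl

instance : Fintype Step := ⟨{Step.U, Step.D}, by intro x; cases x <;> simp⟩

def stepVal : Option Step → ℤ
  | some Step.U => 1
  | some Step.D => -1
  | none => 0

theorem height_append (a b : List Step) : height (a ++ b) = height a + height b := by
  simp [height, List.count_append]; ring

theorem height_take_succ (w : List Step) (i : ℕ) :
    height (w.take (i+1)) = height (w.take i) + stepVal (w.get? i) := by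
  rw [List.take_succ, height_append]
  congr 1
  rw [List.get?_eq_getElem?]
  rcases h : w[i]? with _ | s
  · simp [stepVal, h, height, List.get?_eq_getElem?]
  · cases s <;> simp [stepVal, h, height, List.get?_eq_getElem?]

theorem stepVal_le (o : Option Step) : stepVal o ≤ 1 := by
  cases o with
  | none => simp [stepVal]
  | some s => cases s <;> simp [stepVal]

theorem neg_one_le_stepVal (o : Option Step) : -1 ≤ stepVal o := by
  cases o with
  | none => simp [stepVal]
  | some s => cases s <;> simp [stepVal]

theorem height_take_le (w : List Step) {k j : ℕ} (h : k ≤ j) :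
    height (w.take j) ≤ height (w.take k) + (j - k : ℕ) := by
  induction j with
  | zero => simp_all
  | succ j ih =>
    rcases Nat.eq_or_lt_of_le h with rfl | h'
    · simp
    · have hk : k ≤ j := Nat.lt_succ_iff.mp h'
      have := ih hk
      rw [height_take_succ]
      have h2 : (j + 1 - k : ℕ) = (j - k : ℕ) + 1 := by omega
      rw [h2]
      push_cast
      have := stepVal_le (w.get? j)
      omega

theorem height_take_ge (w : List Step) {k j : ℕ} (h : k ≤ j) :
    height (w.take k) - (j - k : ℕ) ≤ height (w.take j) := by
  induction j with
  | zero => simp_all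
  | succ j ih =>
    rcases Nat.eq_or_lt_of_le h with rfl | h'
    · simp
    · have hk : k ≤ j := Nat.lt_succ_iff.mp h'
      have := ih hk
      rw [height_take_succ]
      have h2 : (j + 1 - k : ℕ) = (j - k : ℕ) + 1 := by omega
      rw [h2]
      push_cast
      have := neg_one_le_stepVal (w.get? j)
      omega

theorem height_take_parity (w : List Step) (i : ℕ) (hi : i ≤ w.length) :
    (2 : ℤ) ∣ (height (w.take i) + i) := by
  induction i with
  | zero => simp [height]
  | succ i ih =>
    have hi' : i ≤ w.length := by omega
    have hdvd := ih hi'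
    rw [height_take_succ]
    have hne : w.get? i ≠ none := by
      rw [List.get?_eq_getElem?]
      simp [List.getElem?_eq_none_iff]
      omega
    rcases h : w.get? i with _ | s
    · exact absurd h hne
    · cases s <;> simp [stepVal] <;> push_cast <;> omega

theorem stepVal_inj {o o' : Option Step} (h : stepVal o = stepVal o') : o = o' := by
  cases o with
  | none => cases o' with
    | none => rfl
    | some s => cases s <;> simp [stepVal] at h
  | some s => cases o' with
    | none => cases s <;> simp [stepVal] at h
    | some s' => cases s <;> cases s' <;> simp_all [stepVal]

theorem eq_of_heights_eq {w w' : List Step}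
    (hh : ∀ i, height (w.take i) = height (w'.take i)) : w = w' := by
  apply List.ext_getElem?
  intro i
  have h1 := height_take_succ w i
  have h2 := height_take_succ w' i
  rw [hh i, hh (i+1)] at h1
  have h3 : stepVal (w.get? i) = stepVal (w'.get? i) := by omega
  have h4 := stepVal_inj h3
  rwa [List.get?_eq_getElem?, List.get?_eq_getElem?] at h4

theorem flip_heights (A C : List Step) (j : ℕ) :
    height ((A ++ [Step.U, Step.D] ++ C).take j)
      = height ((A ++ [Step.D, Step.U] ++ C).take j)
        + (if j = A.length + 1 then 2 else 0) := by
  rcases le_or_gt j A.length with h | h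
  · rw [List.append_assoc, List.append_assoc, List.take_append_of_le_length h,
      List.take_append_of_le_length h]
    rw [if_neg (by omega)]
    ring
  · obtain ⟨k, hk, rfl⟩ : ∃ k, 1 ≤ k ∧ j = A.length + k := ⟨j - A.length, by omega, by omega⟩
    rw [List.append_assoc, List.append_assoc, List.take_length_add_append, List.take_length_add_append]
    rw [height_append, height_append]
    rcases Nat.eq_or_lt_of_le hk with rfl | hk2
    · have e1 : List.count Step.D [Step.U] = 0 := rfl
      have e2 : List.count Step.U [Step.D] = 0 := rfl
      have e3 : List.count Step.U [Step.U] = 1 := rfl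
      have e4 : List.count Step.D [Step.D] = 1 := rfl
      rw [if_pos rfl]
      simp [height, e1, e2, e3, e4]
      ring
    · obtain ⟨m, rfl⟩ : ∃ m, k = 2 + m := ⟨k - 2, by omega⟩
      rw [if_neg (by omega)]
      have h2 : 2 + m = m + 1 + 1 := by omega
      rw [h2]
      simp only [List.cons_append, List.nil_append, List.take_succ_cons]
      simp [height, List.count_cons]

theorem count_U_add_count_D (w : List Step) : w.count Step.U + w.count Step.D = w.length := by
  induction w with
  | nil => simp
  | cons s t ih => cases s <;> simp [List.count_cons] <;> omega

/-- The flip of `w` at position `i`: replaces the factor at positions `i, i+1` by `UD`. -/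
def flipAt (w : List Step) (i : ℕ) : List Step :=
  w.take i ++ [Step.U, Step.D] ++ w.drop (i + 2)

theorem get?_some_lt {w : List Step} {i : ℕ} {s : Step} (h : w.get? i = some s) :
    i < w.length := by
  rw [List.get?_eq_getElem?] at h
  exact (List.getElem?_eq_some_iff.mp h).1

theorem exists_get?_some {w : List Step} {i : ℕ} (h : i < w.length) :
    ∃ s, w.get? i = some s := by
  rw [List.get?_eq_getElem?]
  exact ⟨w[i], List.getElem?_eq_getElem h⟩

theorem decomp_DU {w : List Step} {i : ℕ} (hD : w.get? i = some Step.D)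
    (hU : w.get? (i+1) = some Step.U) :
    w = w.take i ++ [Step.D, Step.U] ++ w.drop (i + 2) := by
  have h1 : i < w.length := get?_some_lt hD
  have h2 : i + 1 < w.length := get?_some_lt hU
  rw [List.get?_eq_getElem?] at hD hU
  have e1 : w.drop i = Step.D :: w.drop (i+1) := by
    rw [List.drop_eq_getElem_cons h1]
    congr 1
    have := List.getElem?_eq_getElem h1
    rw [this] at hD; exact Option.some_injective _ hD
  have e2 : w.drop (i+1) = Step.U :: w.drop (i+2) := by
    rw [List.drop_eq_getElem_cons h2]
    congr 1
    have := List.getElem?_eq_getElem h2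
    rw [this] at hU; exact Option.some_injective _ hU
  conv_lhs => rw [← List.take_append_drop i w]
  rw [e1, e2]
  simp

theorem flipAt_heights {w : List Step} {i : ℕ} (hD : w.get? i = some Step.D)
    (hU : w.get? (i+1) = some Step.U) (j : ℕ) :
    height ((flipAt w i).take j) = height (w.take j) + (if j = i + 1 then 2 else 0) := by
  have hlen : (w.take i).length = i := by
    have := get?_some_lt hD
    simp [List.length_take]; omega
  have := flip_heights (w.take i) (w.drop (i+2)) j
  rw [hlen] at this
  rw [flipAt, this]
  congr 2
  rw [← decomp_DU hD hU]

theorem flipAt_grandDyck {n : ℕ} {w : List Step} (hw : IsGrandDyck n w) {i : ℕ}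
    (hD : w.get? i = some Step.D) (hU : w.get? (i+1) = some Step.U) :
    IsGrandDyck n (flipAt w i) := by
  obtain ⟨hl, hc⟩ := hw
  have hdec := decomp_DU hD hU
  constructor
  · have e : (flipAt w i).length = w.length := by
      conv_rhs => rw [hdec]
      simp [flipAt]
    rw [e, hl]
  · have e : (flipAt w i).count Step.U = w.count Step.U := by
      conv_rhs => rw [hdec]
      simp [flipAt, List.count_append, List.count_cons]
    rw [e, hc]

theorem height_take_full {n : ℕ} {w : List Step} (hw : IsGrandDyck n w) {j : ℕ}
    (hj : 2 * n ≤ j) : height (w.take j) = 0 := by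
  obtain ⟨hl, hc⟩ := hw
  rw [List.take_of_length_le (by omega)]
  have := count_U_add_count_D w
  simp [height]
  omega

theorem covers_flipAt {n : ℕ} {w : List Step} (hw : IsGrandDyck n w) {i : ℕ}
    (hD : w.get? i = some Step.D) (hU : w.get? (i+1) = some Step.U) :
    Covers (IsGrandDyck n) w (flipAt w i) := by
  have hts := flipAt_heights hD hU
  have hi1 : i + 1 < w.length := get?_some_lt hU
  refine ⟨hw, flipAt_grandDyck hw hD hU, ⟨fun j => by rw [hts j]; split <;> omega, ?_⟩, ?_⟩
  · intro hcon
    have := hcon (i+1)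
    rw [hts (i+1), if_pos rfl] at this
    omega
  · rintro z hz ⟨⟨hle1, hn1⟩, ⟨hle2, hn2⟩⟩
    have hflip : ∀ j, j ≠ i + 1 → height (z.take j) = height (w.take j) := by
      intro j hj
      have a1 := hle1 j
      have a2 := hle2 j
      rw [hts j, if_neg hj] at a2
      omega
    have hp1 := height_take_parity w (i+1) (by omega)
    have hp2 := height_take_parity z (i+1) (by rw [hz.1, ← hw.1]; omega)
    have a1 := hle1 (i+1)
    have a2 := hle2 (i+1)
    rw [hts (i+1), if_pos rfl] at a2
    rcases (by omega :
        height (z.take (i+1)) = height (w.take (i+1)) ∨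
        height (z.take (i+1)) = height (w.take (i+1)) + 2) with hcase | hcase
    · apply hn1
      intro j
      rcases eq_or_ne j (i+1) with rfl | hj
      · omega
      · rw [hflip j hj]
    · apply hn2
      intro j
      rw [hts j]
      rcases eq_or_ne j (i+1) with rfl | hj
      · rw [if_pos rfl]; omega
      · rw [if_neg hj, hflip j hj]; omega

theorem height_down {w : List Step} {a b : ℕ} (hble : b ≤ w.length)
    (hD : ∀ q, a ≤ q → q < b → w.get? q ≠ some Step.U) :
    ∀ j, a ≤ j → j ≤ b → height (w.take j) = height (w.take a) - (j - a : ℕ) := by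
  intro j hj1 hj2
  induction j with
  | zero =>
    have : a = 0 := by omega
    simp [this]
  | succ j ih =>
    rcases Nat.eq_or_lt_of_le hj1 with heq | hlt
    · rw [← heq]; simp
    · have hja : a ≤ j := by omega
      have hih := ih hja (by omega)
      rw [height_take_succ, hih]
      have hjlen : j < w.length := by omega
      obtain ⟨s, hs⟩ := exists_get?_some hjlen
      have hsD : s = Step.D := by
        cases s
        · exact absurd hs (hD j hja (by omega))
        · rfl
      rw [hsD] at hs
      rw [hs]
      have e : stepVal (some Step.D) = -1 := rfl
      rw [e]
      have h4 : (j + 1 - a : ℕ) = (j - a : ℕ) + 1 := by omega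
      rw [h4]
      push_cast
      ring

theorem flip_of_covers {n : ℕ} {w w' : List Step} (h : Covers (IsGrandDyck n) w w') :
    ∃ i, w.get? i = some Step.D ∧ w.get? (i+1) = some Step.U ∧ w' = flipAt w i := by
  obtain ⟨hw, hw', ⟨hle, hnle⟩, hmid⟩ := h
  rw [PathLe] at hnle
  push_neg at hnle
  obtain ⟨i0, hi0⟩ := hnle
  have hfull := fun j hj => height_take_full hw (j := j) hj
  have hfull' := fun j hj => height_take_full hw' (j := j) hj
  have hi0lt : i0 < 2 * n := by
    by_contra hcon
    rw [hfull i0 (by omega), hfull' i0 (by omega)] at hi0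
    omega
  -- a : greatest index ≤ i0 where heights agree
  set P : ℕ → Prop := fun j => height (w.take j) = height (w'.take j) with hP
  have hP0 : P 0 := by simp [hP, height]
  set a := Nat.findGreatest P i0 with ha
  have haP : P a := Nat.findGreatest_spec (Nat.zero_le i0) hP0
  have hale : a ≤ i0 := Nat.findGreatest_le i0
  have halt : a < i0 := by
    rcases Nat.eq_or_lt_of_le hale with heq | h
    · exfalso; rw [heq] at haP; simp only [hP] at haP; omega
    · exact h
  have hagr : ∀ j, a < j → j ≤ i0 → ¬ P j := fun j h1 h2 =>
    Nat.findGreatest_is_greatest h1 h2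
  -- b : least index ≥ i0 where heights agree
  have hQex : ∃ j, i0 ≤ j ∧ P j := ⟨2 * n, by omega, by
    show height (w.take (2*n)) = height (w'.take (2*n))
    rw [hfull _ le_rfl, hfull' _ le_rfl]⟩
  set b := Nat.find hQex with hb
  obtain ⟨hib, hbP⟩ : i0 ≤ b ∧ P b := Nat.find_spec hQex
  have hbmin : ∀ j, j < b → i0 ≤ j → ¬ P j := fun j h1 h2 hPj =>
    Nat.find_min hQex h1 ⟨h2, hPj⟩
  have hblt : i0 < b := by
    rcases Nat.eq_or_lt_of_le hib with heq | h
    · exfalso; rw [← heq] at hbP; simp only [hP] at hbP; omega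
    · exact h
  have hble : b ≤ 2 * n := Nat.find_min' hQex ⟨by omega, by
    show height (w.take (2*n)) = height (w'.take (2*n))
    rw [hfull _ le_rfl, hfull' _ le_rfl]⟩
  have hstrict : ∀ j, a < j → j < b → height (w.take j) < height (w'.take j) := by
    intro j h1 h2
    have hlej := hle j
    rcases le_or_gt j i0 with hji | hji
    · have := hagr j h1 hji
      simp only [hP] at this; omega
    · have := hbmin j h2 (by omega)
      simp only [hP] at this; omega
  have hwlen : w.length = 2 * n := hw.1
  have hwlen' : w'.length = 2 * n := hw'.1
  -- the letter of w at a is D (not U)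
  have hwa : w.get? a ≠ some Step.U := by
    intro hcon
    have s1 := height_take_succ w a
    have s2 := height_take_succ w' a
    rw [hcon] at s1
    have : stepVal (some Step.U) = 1 := rfl
    rw [this] at s1
    have hs' := stepVal_le (w'.get? a)
    have hstr := hstrict (a+1) (by omega) (by omega)
    simp only [hP] at haP
    omega
  -- there is a U at some position in [a, b)
  have hUex : ∃ q, (a ≤ q ∧ w.get? q = some Step.U) := by
    by_contra hcon
    push_neg at hcon
    have hdown := height_down (w := w) (a := a) (b := b) (by omega)
      (fun q h1 _ => hcon q h1)
    have h1 := hdown b (by omega) le_rfl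
    have h2 := hdown i0 (by omega) (by omega)
    have h3 := height_take_ge w' (k := i0) (j := b) (by omega)
    simp only [hP] at haP hbP
    omega
  -- p : minimal such position
  set p := Nat.find hUex with hp
  obtain ⟨hap, hpU⟩ : a ≤ p ∧ w.get? p = some Step.U := Nat.find_spec hUex
  have hpa : a < p := by
    rcases Nat.eq_or_lt_of_le hap with heq | h
    · exfalso; rw [← heq] at hpU; exact hwa hpU
    · exact h
  have hpb : p < b := by
    by_contra hcon
    push_neg at hcon
    -- all of [a, b) is D, same contradiction
    have hconD : ∀ q, a ≤ q → q < b → w.get? q ≠ some Step.U := by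
      intro q h1 h2 hq
      have := Nat.find_min' hUex ⟨h1, hq⟩
      omega
    have hdown := height_down (w := w) (a := a) (b := b) (by omega) hconD
    have h1 := hdown b (by omega) le_rfl
    have h2 := hdown i0 (by omega) (by omega)
    have h3 := height_take_ge w' (k := i0) (j := b) (by omega)
    simp only [hP] at haP hbP
    omega
  -- the letter before p is D
  have hp1 : 1 ≤ p := by omega
  have hpD : w.get? (p - 1) = some Step.D := by
    have hlen : p - 1 < w.length := by omega
    obtain ⟨s, hs⟩ := exists_get?_some hlen
    have : s = Step.D := by
      cases s
      · exfalso
        have := Nat.find_min hUex (m := p - 1) (by omega) ⟨by omega, hs⟩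
        exact this
      · rfl
    rw [this] at hs; exact hs
  refine ⟨p - 1, hpD, ?_, ?_⟩
  · rw [show p - 1 + 1 = p by omega]; exact hpU
  · -- w' = flipAt w (p-1)
    have hpU' : w.get? (p - 1 + 1) = some Step.U := by
      rw [show p - 1 + 1 = p by omega]; exact hpU
    have hts := flipAt_heights hpD hpU'
    have hz := flipAt_grandDyck hw hpD hpU'
    -- z ≤ w'
    have hparw := height_take_parity w p (by omega)
    have hparw' := height_take_parity w' p (by omega)
    have hstrp : height (w.take p) < height (w'.take p) := hstrict p hpa hpb
    have hzle : PathLe (flipAt w (p-1)) w' := by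
      intro j
      rw [hts j]
      rcases eq_or_ne j (p - 1 + 1) with rfl | hj
      · rw [if_pos rfl, show p - 1 + 1 = p by omega]
        omega
      · rw [if_neg hj]
        have := hle j
        omega
    have hwzlt : PathLt w (flipAt w (p-1)) := by
      constructor
      · intro j; rw [hts j]; split <;> omega
      · intro hcon
        have := hcon (p - 1 + 1)
        rw [hts (p-1+1), if_pos rfl] at this
        omega
    by_contra hne
    have hzlt : PathLt (flipAt w (p-1)) w' := by
      refine ⟨hzle, fun hcon => ?_⟩
      apply hne
      apply eq_of_heights_eq
      intro j
      exact le_antisymm (hcon j) (hzle j)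
    exact hmid _ hz ⟨hwzlt, hzlt⟩


/-! ### Counting -/

instance wordFinite (L k : ℕ) : Finite {v : List Step // v.length = L ∧ v.count Step.U = k} := by
  have h : {l : List Step | l.length = L}.Finite := List.finite_length_eq _ _
  haveI := h.to_subtype
  apply Finite.of_injective
    (fun v : {v : List Step // v.length = L ∧ v.count Step.U = k} =>
      (⟨v.1, v.2.1⟩ : {l : List Step | l.length = L}))
  intro a b hab
  have h2 := congrArg Subtype.val hab
  exact Subtype.ext h2

/-- prepending `D` to a word. -/
def consD (L k : ℕ) : {t : List Step // t.length = L ∧ t.count Step.U = k} →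
    {v : List Step // v.length = L + 1 ∧ v.count Step.U = k} :=
  fun t => ⟨Step.D :: t.1, by simp [List.count_cons, t.2.1, t.2.2]⟩

/-- head attachment map for counting words with `k+1` letters `U`. -/
def fsucc (L k : ℕ) : ({t : List Step // t.length = L ∧ t.count Step.U = k + 1} ⊕
      {t : List Step // t.length = L ∧ t.count Step.U = k}) →
    {v : List Step // v.length = L + 1 ∧ v.count Step.U = k + 1} :=
  fun x => match x with
    | Sum.inl t => ⟨Step.D :: t.1, by simp [List.count_cons, t.2.1, t.2.2]⟩
    | Sum.inr t => ⟨Step.U :: t.1, by simp [List.count_cons, t.2.1, t.2.2]⟩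

theorem card_words (L k : ℕ) :
    Nat.card {v : List Step // v.length = L ∧ v.count Step.U = k} = L.choose k := by
  induction L generalizing k with
  | zero =>
    cases k with
    | zero =>
      haveI : Nonempty {v : List Step // v.length = 0 ∧ v.count Step.U = 0} :=
        ⟨⟨[], by simp⟩⟩
      haveI hsub : Subsingleton {v : List Step // v.length = 0 ∧ v.count Step.U = 0} := by
        constructor
        rintro ⟨v, hv1, hv2⟩ ⟨u, hu1, hu2⟩
        apply Subtype.ext
        show v = u
        rw [List.length_eq_zero_iff] at hv1 hu1
        rw [hv1, hu1]
      rw [Nat.card_unique]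
      rfl
    | succ k =>
      haveI : IsEmpty {v : List Step // v.length = 0 ∧ v.count Step.U = k + 1} := by
        constructor
        rintro ⟨v, hv1, hv2⟩
        have := List.count_le_length (a := Step.U) (l := v)
        omega
      rw [Nat.card_of_isEmpty, Nat.choose_zero_succ]
  | succ L ih =>
    cases k with
    | zero =>
      have hbij : Function.Bijective (consD L 0) := by
        constructor
        · rintro ⟨t, ht⟩ ⟨t', ht'⟩ h
          simp only [consD, Subtype.mk.injEq, List.cons.injEq] at h
          exact Subtype.ext h.2
        · rintro ⟨v, hv1, hv2⟩
          cases v with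
          | nil => simp at hv1
          | cons s t =>
            cases s with
            | U => simp [List.count_cons] at hv2
            | D =>
              refine ⟨⟨t, by simpa using hv1, by simpa [List.count_cons] using hv2⟩, ?_⟩
              simp [consD]
      rw [← Nat.card_congr (Equiv.ofBijective _ hbij), ih 0, Nat.choose_zero_right,
        Nat.choose_zero_right]
    | succ k =>
      have hbij : Function.Bijective (fsucc L k) := by
        constructor
        · rintro (⟨t, ht⟩ | ⟨t, ht⟩) (⟨t', ht'⟩ | ⟨t', ht'⟩) h <;>
            simp only [fsucc, Subtype.mk.injEq, List.cons.injEq] at h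
          · exact congrArg Sum.inl (Subtype.ext h.2)
          · exact absurd h.1 (by simp)
          · exact absurd h.1 (by simp)
          · exact congrArg Sum.inr (Subtype.ext h.2)
        · rintro ⟨v, hv1, hv2⟩
          cases v with
          | nil => simp at hv1
          | cons s t =>
            cases s with
            | U =>
              refine ⟨Sum.inr ⟨t, by simpa using hv1, ?_⟩, ?_⟩
              · simp [List.count_cons] at hv2
                omega
              · simp [fsucc]
            | D =>
              refine ⟨Sum.inl ⟨t, by simpa using hv1, ?_⟩, ?_⟩
              · simpa [List.count_cons] using hv2
              · simp [fsucc]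
      rw [← Nat.card_congr (Equiv.ofBijective _ hbij), Nat.card_sum, ih (k+1), ih k,
        Nat.choose_succ_succ']
      omega

theorem flipAt_inj {w : List Step} {i i' : ℕ}
    (hD : w.get? i = some Step.D) (hU : w.get? (i+1) = some Step.U)
    (hD' : w.get? i' = some Step.D) (hU' : w.get? (i'+1) = some Step.U)
    (h : flipAt w i = flipAt w i') : i = i' := by
  by_contra hne
  have h1 := flipAt_heights hD hU (i+1)
  have h2 := flipAt_heights hD' hU' (i+1)
  rw [h] at h1
  rw [if_pos rfl] at h1
  rw [if_neg (by omega)] at h2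
  omega

/-- covering pairs are in bijection with pairs (word, position of a `DU` factor). -/
theorem card_edges_eq (n : ℕ) :
    grandDyckEdges n = Nat.card {q : List Step × ℕ //
      IsGrandDyck n q.1 ∧ q.1.get? q.2 = some Step.D ∧ q.1.get? (q.2+1) = some Step.U} := by
  rw [grandDyckEdges]
  apply Nat.card_congr
  symm
  apply Equiv.ofBijective
    (f := fun q => (⟨(q.1.1, flipAt q.1.1 q.1.2), covers_flipAt q.2.1 q.2.2.1 q.2.2.2⟩ :
      {p : List Step × List Step // Covers (IsGrandDyck n) p.1 p.2}))
  constructor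
  · rintro ⟨⟨w, i⟩, hq⟩ ⟨⟨w', i'⟩, hq'⟩ h
    simp only [Subtype.mk.injEq, Prod.mk.injEq] at h
    obtain ⟨rfl, h2⟩ := h
    have h3 := flipAt_inj hq.2.1 hq.2.2 hq'.2.1 hq'.2.2 h2
    subst h3; rfl
  · rintro ⟨⟨w, w'⟩, hcov⟩
    obtain ⟨i, hD, hU, hflip⟩ := flip_of_covers hcov
    refine ⟨⟨(w, i), hcov.1, hD, hU⟩, ?_⟩
    apply Subtype.ext
    show ((w : List Step), flipAt w i) = (w, w')
    have hf2 : w' = flipAt w i := hflip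
    rw [hf2]

/-- insertion of a `DU` factor at position `i`. -/
def gIns (m : ℕ)
    (r : {r : ℕ × List Step // r.1 ≤ 2*m ∧ r.2.length = 2*m ∧ r.2.count Step.U = m}) :
    {q : List Step × ℕ //
      IsGrandDyck (m+1) q.1 ∧ q.1.get? q.2 = some Step.D ∧ q.1.get? (q.2+1) = some Step.U} :=
  ⟨(r.1.2.take r.1.1 ++ [Step.D, Step.U] ++ r.1.2.drop r.1.1, r.1.1), by
    obtain ⟨⟨i, v⟩, hprop⟩ := r
    have hi : i ≤ 2*m := hprop.1
    have hl : v.length = 2*m := hprop.2.1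
    have hc : v.count Step.U = m := hprop.2.2
    have hmid1 : List.count Step.U ([Step.D, Step.U] : List Step) = 1 := rfl
    have hlen : (v.take i).length = i := by rw [List.length_take]; omega
    refine ⟨⟨?_, ?_⟩, ?_, ?_⟩
    · show (v.take i ++ [Step.D, Step.U] ++ v.drop i).length = 2 * (m + 1)
      simp only [List.length_append, List.length_take, List.length_drop, List.length_cons,
        List.length_nil]
      omega
    · show (v.take i ++ [Step.D, Step.U] ++ v.drop i).count Step.U = m + 1
      have hcnt : (v.take i).count Step.U + (v.drop i).count Step.U = m := by
        rw [← hc, ← List.count_append, List.take_append_drop]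
      rw [List.count_append, List.count_append, hmid1]
      omega
    · show (v.take i ++ [Step.D, Step.U] ++ v.drop i).get? i = some Step.D
      rw [List.append_assoc, List.get?_eq_getElem?,
        List.getElem?_append_right (by omega), hlen]
      simp
    · show (v.take i ++ [Step.D, Step.U] ++ v.drop i).get? (i+1) = some Step.U
      rw [List.append_assoc, List.get?_eq_getElem?,
        List.getElem?_append_right (by omega), hlen]
      simp⟩

theorem gIns_val (m : ℕ) (i : ℕ) (v : List Step) (h) :
    (gIns m ⟨(i, v), h⟩).1 = (v.take i ++ [Step.D, Step.U] ++ v.drop i, i) := rfl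

theorem card_marked (m : ℕ) :
    Nat.card {q : List Step × ℕ //
      IsGrandDyck (m+1) q.1 ∧ q.1.get? q.2 = some Step.D ∧ q.1.get? (q.2+1) = some Step.U}
      = (2*m+1) * Nat.choose (2*m) m := by
  have hbij : Function.Bijective (gIns m) := by
    constructor
    · rintro ⟨⟨i, v⟩, hp⟩ ⟨⟨i', v'⟩, hp'⟩ h
      have hl : v.length = 2*m := hp.2.1
      have hl' : v'.length = 2*m := hp'.2.1
      have hi : i ≤ 2*m := hp.1
      have hi' : i' ≤ 2*m := hp'.1
      have h0 := congrArg Subtype.val h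
      rw [gIns_val, gIns_val, Prod.mk.injEq] at h0
      obtain ⟨h1, h2⟩ := h0
      obtain rfl : i = i' := h2
      apply Subtype.ext
      show ((i, v) : ℕ × List Step) = (i, v')
      rw [Prod.mk.injEq]
      refine ⟨rfl, ?_⟩
      have hlen : (v.take i).length = i := by rw [List.length_take]; omega
      have hlen' : (v'.take i).length = i := by rw [List.length_take]; omega
      rw [List.append_assoc, List.append_assoc] at h1
      have ht : v.take i = v'.take i := by
        have h3 := congrArg (List.take i) h1
        rwa [List.take_append_of_le_length (by omega), List.take_append_of_le_length (by omega),
          List.take_take, List.take_take, min_self] at h3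
      rw [ht] at h1
      have hd : v.drop i = v'.drop i := by
        have h5 := List.append_cancel_left h1
        simpa using h5
      calc v = v.take i ++ v.drop i := (List.take_append_drop i v).symm
        _ = v'.take i ++ v'.drop i := by rw [ht, hd]
        _ = v' := List.take_append_drop i v'
    · rintro ⟨⟨w, i⟩, hgd, hD, hU⟩
      dsimp only at hgd hD hU
      have hi1 : i + 1 < w.length := get?_some_lt hU
      have hwl : w.length = 2*m + 2 := by rw [hgd.1]; ring
      have hdec := decomp_DU hD hU
      have hmid1 : List.count Step.U ([Step.D, Step.U] : List Step) = 1 := rfl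
      have hcnt : (w.take i).count Step.U + 1 + (w.drop (i+2)).count Step.U = m + 1 := by
        have h4 := congrArg (List.count Step.U) hdec
        rw [hgd.2] at h4
        rw [List.count_append, List.count_append, hmid1] at h4
        omega
      refine ⟨⟨(i, w.take i ++ w.drop (i+2)), ⟨by omega, ?_, ?_⟩⟩, ?_⟩
      · show (w.take i ++ w.drop (i+2)).length = 2 * m
        simp only [List.length_append, List.length_take, List.length_drop]
        omega
      · show (w.take i ++ w.drop (i+2)).count Step.U = m
        rw [List.count_append]
        omega
      · apply Subtype.ext
        rw [gIns_val]
        have hlen : (w.take i).length = i := by rw [List.length_take]; omega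
        have ht : (w.take i ++ w.drop (i+2)).take i = w.take i := by
          rw [List.take_append_of_le_length (by omega), List.take_take]
          simp [min_def]
        have hd : (w.take i ++ w.drop (i+2)).drop i = w.drop (i+2) :=
          List.drop_left' hlen
        rw [ht, hd]
        show ((w.take i ++ [Step.D, Step.U] ++ w.drop (i+2), i) : List Step × ℕ) = (w, i)
        rw [Prod.mk.injEq]
        exact ⟨hdec.symm, rfl⟩
  rw [← Nat.card_congr (Equiv.ofBijective _ hbij)]
  have e3 : {r : ℕ × List Step // r.1 ≤ 2*m ∧ r.2.length = 2*m ∧ r.2.count Step.U = m} ≃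
      (Fin (2*m+1) × {v : List Step // v.length = 2*m ∧ v.count Step.U = m}) :=
    { toFun := fun r => (⟨r.1.1, by omega⟩, ⟨r.1.2, r.2.2⟩)
      invFun := fun x => ⟨(x.1.1, x.2.1), by omega, x.2.2⟩
      left_inv := by rintro ⟨⟨i, v⟩, h⟩; rfl
      right_inv := by rintro ⟨⟨i, hi⟩, ⟨v, hv⟩⟩; rfl }
  rw [Nat.card_congr e3, Nat.card_prod, card_words]
  congr 1
  rw [Nat.card_eq_fintype_card, Fintype.card_fin]

theorem grandDyckEdges_zero : grandDyckEdges 0 = 0 := by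
  rw [grandDyckEdges]
  have : IsEmpty {p : List Step × List Step // Covers (IsGrandDyck 0) p.1 p.2} := by
    constructor
    rintro ⟨⟨w, w'⟩, hcov⟩
    obtain ⟨i, hD, _, _⟩ := flip_of_covers hcov
    have h1 := get?_some_lt hD
    have h2 := hcov.1.1
    omega
  exact Nat.card_of_isEmpty

theorem grandDyckEdges_succ (m : ℕ) :
    grandDyckEdges (m+1) = (2*m+1) * Nat.choose (2*m) m := by
  rw [card_edges_eq, card_marked]

/-- Twice the number of edges of the Hasse diagram of the Grand Dyck lattice `GD_n`
equals `n` times the central binomial coefficient `C(2n, n)`; equivalently, the Hasse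
index of `GD_n` (number of edges divided by number of vertices) is exactly `n/2`. -/
theorem grandDyckEdges_hasse_index (n : ℕ) :
    2 * grandDyckEdges n = n * Nat.choose (2 * n) n ∧
    (grandDyckEdges n : ℚ) / (Nat.card {w : List Step // IsGrandDyck n w} : ℚ) = (n : ℚ) / 2 := by
  have hv : Nat.card {w : List Step // IsGrandDyck n w} = Nat.choose (2*n) n :=
    card_words (2*n) n
  have h1 : 2 * grandDyckEdges n = n * Nat.choose (2*n) n := by
    cases n with
    | zero => rw [grandDyckEdges_zero]; simp
    | succ m =>
      rw [grandDyckEdges_succ]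
      have A := Nat.add_one_mul_choose_eq (2*m) m
      have B := Nat.add_one_mul_choose_eq (2*m+1) m
      have Csym : (2*m+1).choose (m+1) = (2*m+1).choose m := by
        have h5 := Nat.choose_symm (n := 2*m+1) (k := m+1) (by omega)
        rw [show 2*m+1-(m+1) = m by omega] at h5
        exact h5.symm
      rw [A, Csym]
      have e : 2 * (m+1) = 2*m+1+1 := by ring
      rw [e]
      calc 2 * ((2*m+1).choose m * (m+1)) = (2*m+1+1) * (2*m+1).choose m := by ring
        _ = (2*m+1+1).choose (m+1) * (m+1) := B
        _ = (m+1) * (2*m+1+1).choose (m+1) := by ring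
  refine ⟨h1, ?_⟩
  rw [hv]
  have hpos : 0 < Nat.choose (2*n) n := Nat.choose_pos (by omega)
  have hq : ((Nat.choose (2*n) n : ℚ)) ≠ 0 := by
    exact_mod_cast hpos.ne'
  rw [div_eq_div_iff hq two_ne_zero]
  have h2 : grandDyckEdges n * 2 = n * Nat.choose (2*n) n := by omega
  exact_mod_cast h2
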